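/- Let G = ℤ/3ℤ * ℤ/4ℤ with generators a (a³ = 1) and b (b⁴ = 1). Then the words b a b² a² and b² a b a² are NOT conjugate in G; equivalently, the element bab²a² − b²aba² of the free k-module on conjugacy classes of G is nonzero (k any nontrivial commutative ring). -/

import Mathlib

/-- The free product `ℤ/3ℤ * ℤ/4ℤ`, the orbifold fundamental group of a disk with two orbifold
points of orders `3` and `4`. -/
abbrev FP34 : Type := Monoid.Coprod (Multiplicative (ZMod 3)) (Multiplicative (ZMod 4))

/-- The generator `a` of the `ℤ/3ℤ` factor (so `a³ = 1`). -/
def genA34 : FP34 := Monoid.Coprod.inl (Multiplicative.ofAdd (1 : ZMod 3))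

/-- The generator `b` of the `ℤ/4ℤ` factor (so `b⁴ = 1`). -/
def genB34 : FP34 := Monoid.Coprod.inr (Multiplicative.ofAdd (1 : ZMod 4))

/-- The permutation `(4 5 6)` in `S₇`. -/
def permA : Equiv.Perm (Fin 7) :=
  ⟨![0,1,2,3,5,6,4], ![0,1,2,3,6,4,5], by decide, by decide⟩

/-- The permutation `(0 6 1 2)(3 5)` in `S₇`. -/
def permB : Equiv.Perm (Fin 7) :=
  ⟨![6,2,0,5,4,3,1], ![2,6,1,5,4,3,0], by decide, by decide⟩

/-- The map `ℤ/3ℤ → S₇` sending `1` to `permA`. -/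
def homA : Multiplicative (ZMod 3) →* Equiv.Perm (Fin 7) where
  toFun x := permA ^ (x.toAdd.val)
  map_one' := by decide
  map_mul' := by decide

/-- The map `ℤ/4ℤ → S₇` sending `1` to `permB`. -/
def homB : Multiplicative (ZMod 4) →* Equiv.Perm (Fin 7) where
  toFun x := permB ^ (x.toAdd.val)
  map_one' := by decide
  map_mul' := by decide

/-- The representation `FP34 →* S₇`. -/
def rho34 : FP34 →* Equiv.Perm (Fin 7) := Monoid.Coprod.lift homA homB

lemma rho34_genA : rho34 genA34 = permA := by
  show Monoid.Coprod.lift homA homB (Monoid.Coprod.inl _) = _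
  rw [Monoid.Coprod.lift_apply_inl]
  decide

lemma rho34_genB : rho34 genB34 = permB := by
  show Monoid.Coprod.lift homA homB (Monoid.Coprod.inr _) = _
  rw [Monoid.Coprod.lift_apply_inr]
  decide

lemma notConj34 : ¬ IsConj (genB34 * genA34 * genB34 ^ 2 * genA34 ^ 2)
    (genB34 ^ 2 * genA34 * genB34 * genA34 ^ 2) := by
  intro h
  have h' := rho34.map_isConj h
  simp only [map_mul, map_pow, rho34_genA, rho34_genB] at h'
  rw [isConj_iff] at h'
  obtain ⟨c, hc⟩ := h'
  have h4 : (permB ^ 2 * permA * permB * permA ^ 2) ^ 4 = 1 := by decide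
  rw [← hc, conj_pow] at h4
  have : (permB * permA * permB ^ 2 * permA ^ 2) ^ 4 = 1 := by
    have := congrArg (fun z => c⁻¹ * z * c) h4
    simpa [mul_assoc] using this
  exact absurd this (by decide)

/-- In `G = ℤ/3ℤ * ℤ/4ℤ` (with generators `a`, `a³ = 1`, and `b`, `b⁴ = 1`), the words
`b a b² a²` and `b² a b a²` are NOT conjugate; equivalently, for any nontrivial commutative
ring `k`, the element `b a b² a² − b² a b a²` of the free `k`-module on the conjugacy classes
of `G` is nonzero. -/
theorem goldman_bracket_nonzero_Z3_Z4 (k : Type*) [CommRing k] [Nontrivial k] :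
    ¬ IsConj (genB34 * genA34 * genB34 ^ 2 * genA34 ^ 2)
      (genB34 ^ 2 * genA34 * genB34 * genA34 ^ 2) ∧
    (Finsupp.single (ConjClasses.mk (genB34 * genA34 * genB34 ^ 2 * genA34 ^ 2)) (1 : k)
        - Finsupp.single (ConjClasses.mk (genB34 ^ 2 * genA34 * genB34 * genA34 ^ 2)) (1 : k)
      ≠ (0 : ConjClasses FP34 →₀ k)) := by
  refine ⟨notConj34, ?_⟩
  have hne : ConjClasses.mk (genB34 * genA34 * genB34 ^ 2 * genA34 ^ 2)
      ≠ ConjClasses.mk (genB34 ^ 2 * genA34 * genB34 * genA34 ^ 2) := by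
    rw [ne_eq, ConjClasses.mk_eq_mk_iff_isConj]
    exact notConj34
  intro h0
  have := congrArg (fun f => f (ConjClasses.mk (genB34 * genA34 * genB34 ^ 2 * genA34 ^ 2))) h0
  simp [Finsupp.single_eq_of_ne hne] at this
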